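/- The vector 𝐆 built from the completed Appell–Lerch sums M̃ and eta-quotient multiples of the Rogers–Ramanujan functions satisfies 𝐆(z+1) = M_T 𝐆(z) for all z in the upper half-plane ℍ. -/

import Mathlib

noncomputable section

open MeasureTheory

/-- The finite q-Pochhammer symbol `(a; q)_n = ∏_{m=0}^{n-1} (1 - a q^m)`. -/
def qp (a q : ℂ) (n : ℕ) : ℂ := ∏ m ∈ Finset.range n, (1 - a * q ^ m)

/-- The infinite q-Pochhammer symbol `(a; q)_∞ = ∏_{m=0}^{∞} (1 - a q^m)`. -/
def qpInf (a q : ℂ) : ℂ := ∏' m : ℕ, (1 - a * q ^ m)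

/-- Ramanujan's fifth-order mock theta function `f₀`. -/
def mtf0 (q : ℂ) : ℂ := ∑' n : ℕ, q ^ (n ^ 2) / qp (-q) q n

/-- Ramanujan's fifth-order mock theta function `f₁`. -/
def mtf1 (q : ℂ) : ℂ := ∑' n : ℕ, q ^ (n * (n + 1)) / qp (-q) q n

/-- Ramanujan's fifth-order mock theta function `F₀`. -/
def mtF0 (q : ℂ) : ℂ := ∑' n : ℕ, q ^ (2 * n ^ 2) / qp q (q ^ 2) n

/-- Ramanujan's fifth-order mock theta function `F₁`. -/
def mtF1 (q : ℂ) : ℂ := ∑' n : ℕ, q ^ (2 * n * (n + 1)) / qp q (q ^ 2) (n + 1)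

/-- `M(a/5, q^k) = Σ_{n≥1} q^{k n(n-1)} / ((q^{ka/5}; q^k)_n (q^{k - ka/5}; q^k)_n)`
for `k` divisible by 5 (used with `a ∈ {1,2}` and `k ∈ {5,10}`). -/
def Mq (a k : ℕ) (q : ℂ) : ℂ :=
  ∑' n : ℕ, q ^ (k * (n + 1) * n) /
    (qp (q ^ (k * a / 5)) (q ^ k) (n + 1) * qp (q ^ (k - k * a / 5)) (q ^ k) (n + 1))

/-- `θ₄(0,q) = (q;q)_∞² / (q²;q²)_∞`. -/
def theta4 (q : ℂ) : ℂ := qpInf q q ^ 2 / qpInf (q ^ 2) (q ^ 2)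

/-- `ψ(q) = (q²;q²)_∞² / (q;q)_∞`. -/
def psiTheta (q : ℂ) : ℂ := qpInf (q ^ 2) (q ^ 2) ^ 2 / qpInf q q

/-- The Rogers–Ramanujan function `G(q)`. -/
def RRG (q : ℂ) : ℂ := 1 / (qpInf q (q ^ 5) * qpInf (q ^ 4) (q ^ 5))

/-- The Rogers–Ramanujan function `H(q)`. -/
def RRH (q : ℂ) : ℂ := 1 / (qpInf (q ^ 2) (q ^ 5) * qpInf (q ^ 3) (q ^ 5))

/-- `q^r = e^{2πirz}` for rational `r`. -/
def eQ (r : ℚ) (z : ℂ) : ℂ := Complex.exp (2 * Real.pi * Complex.I * (r : ℂ) * z)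

/-- `ζ_n = e^{2πi/n}`. -/
def zn (n : ℕ) : ℂ := Complex.exp (2 * Real.pi * Complex.I / (n : ℂ))

/-- The Dedekind eta function. -/
def eta (z : ℂ) : ℂ := eQ (1/24) z * ∏' n : ℕ, (1 - eQ 1 z ^ (n + 1))

/-- `g(z) = q^{-1/60} G(q)`. -/
def rrg (z : ℂ) : ℂ := eQ (-1/60) z * RRG (eQ 1 z)

/-- `h(z) = q^{11/60} H(q)`. -/
def rrh (z : ℂ) : ℂ := eQ (11/60) z * RRH (eQ 1 z)

/-- The unary theta function `g_{a,b}(z) = Σ_{ν ∈ a+ℤ} ν e^{πiν²z + 2πiνb}`. -/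
def gth (a b : ℝ) (z : ℂ) : ℂ :=
  ∑' n : ℤ, ((a : ℂ) + (n : ℂ)) *
    Complex.exp (Real.pi * Complex.I * ((a : ℂ) + (n : ℂ)) ^ 2 * z
      + 2 * Real.pi * Complex.I * ((a : ℂ) + (n : ℂ)) * (b : ℂ))

/-- The nonholomorphic integral
`R_{a,b}(z) = -i ∫_{-z̄}^{i∞} g_{a,-b}(τ) (-i(τ+z))^{-1/2} dτ`,
parametrized along the vertical ray `τ = -z̄ + it`, `t ∈ (0,∞)`. -/
def RInt (a b : ℝ) (z : ℂ) : ℂ :=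
  -Complex.I * ∫ t in Set.Ioi (0 : ℝ),
    (gth a (-b) (-(starRingEnd ℂ z) + t * Complex.I) /
      (-Complex.I * ((-(starRingEnd ℂ z) + t * Complex.I) + z)) ^ ((1 : ℂ)/2)) * Complex.I

/-- `M(a/5, z) = Σ_{n≥1} q^{n(n-1)} / ((q^{a/5};q)_n (q^{1-a/5};q)_n)` with `q = e^{2πiz}`. -/
def Mm (a : ℕ) (z : ℂ) : ℂ :=
  ∑' n : ℕ, eQ 1 z ^ ((n + 1) * n) /
    (qp (eQ ((a : ℚ)/5) z) (eQ 1 z) (n + 1) * qp (eQ (1 - (a : ℚ)/5) z) (eQ 1 z) (n + 1))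

/-- `N(a/5, z) = 1 + Σ_{n≥1} q^{n²} / ((ζ₅^a q;q)_n (ζ₅^{-a} q;q)_n)` with `q = e^{2πiz}`. -/
def Nn (a : ℕ) (z : ℂ) : ℂ :=
  1 + ∑' n : ℕ, eQ 1 z ^ ((n + 1) ^ 2) /
    (qp (zn 5 ^ a * eQ 1 z) (eQ 1 z) (n + 1) * qp ((zn 5)⁻¹ ^ a * eQ 1 z) (eQ 1 z) (n + 1))

/-- The completed Appell–Lerch sum `M̃(a/5, z)`. -/
def Mtilde (a : ℕ) (z : ℂ) : ℂ :=
  2 * eQ (3 * (a : ℚ) / 10 * (1 - (a : ℚ)/5) - 1/24) z * Mm a z +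
    zn 10 ^ a * ((zn 12)⁻¹ * RInt ((6 * (a : ℝ) - 5)/30) (1/2) (3 * z)
      + zn 12 * RInt ((6 * (a : ℝ) + 5)/30) (1/2) (3 * z))

/-- The completed mock theta function `f̃₀`. -/
def ftilde0 (z : ℂ) : ℂ :=
  eQ (-1/60) z * mtf0 (eQ 1 z) -
    zn 10 * ((zn 12)⁻¹ * RInt (1/30) (1/2) (30 * z) + zn 12 * RInt (11/30) (1/2) (30 * z))

/-- The completed mock theta function `f̃₁`. -/
def ftilde1 (z : ℂ) : ℂ :=
  eQ (11/60) z * mtf1 (eQ 1 z) -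
    zn 5 * ((zn 12)⁻¹ * RInt (7/30) (1/2) (30 * z) + zn 12 * RInt (17/30) (1/2) (30 * z))

/-- The completed mock theta function `F̃₀`. -/
def Ftilde0 (z : ℂ) : ℂ :=
  eQ (-1/120) z * (mtF0 (eQ 1 z) - 1) +
    (1/2) * zn 10 * ((zn 12)⁻¹ * RInt (1/30) (1/2) (15 * z) + zn 12 * RInt (11/30) (1/2) (15 * z))

/-- The completed mock theta function `F̃₁`. -/
def Ftilde1 (z : ℂ) : ℂ :=
  eQ (71/120) z * mtF1 (eQ 1 z) +
    (1/2) * zn 5 * ((zn 12)⁻¹ * RInt (7/30) (1/2) (15 * z) + zn 12 * RInt (17/30) (1/2) (15 * z))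

/-- `α = √((5-√5)/2)` (as a complex number). -/
def alphaC : ℂ := (Real.sqrt ((5 - Real.sqrt 5)/2) : ℝ)

/-- `β = √((5+√5)/2)` (as a complex number). -/
def betaC : ℂ := (Real.sqrt ((5 + Real.sqrt 5)/2) : ℝ)

/-- The vector `𝐅` of completed fifth-order mock theta functions. -/
def Fvec (z : ℂ) : Fin 6 → ℂ :=
  ![ftilde0 z, ftilde1 z, Ftilde0 (z/2), Ftilde1 (z/2),
    zn 240 * Ftilde0 ((z + 1)/2), zn 240 ^ (-71 : ℤ) * Ftilde1 ((z + 1)/2)]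

/-- The vector `𝐆` built from completed Appell–Lerch sums and eta-quotient multiples of the
Rogers–Ramanujan functions. -/
def Gvec (z : ℂ) : Fin 6 → ℂ :=
  ![-(Mtilde 1 (10 * z)) + eta (5 * z) ^ 2 / eta (10 * z) * rrg z,
    -(Mtilde 2 (10 * z)) + eta (5 * z) ^ 2 / eta (10 * z) * rrh z,
    (1/2) * Mtilde 1 (5 * z / 2) - eta (5 * z) ^ 2 / eta (5 * z / 2) * rrh z,
    (1/2) * Mtilde 2 (5 * z / 2) + eta (5 * z) ^ 2 / eta (5 * z / 2) * rrg z,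
    (1/2) * zn 240 * Mtilde 1 ((5 * z + 5)/2)
      - zn 48 ^ 25 * (eta (5 * z) ^ 2 / eta ((5 * z + 1)/2)) * rrh z,
    (1/2) * zn 240 ^ (-71 : ℤ) * Mtilde 2 ((5 * z + 5)/2)
      + zn 48 * (eta (5 * z) ^ 2 / eta ((5 * z + 1)/2)) * rrg z]

/-- The matrix `M_T`. -/
def MT : Matrix (Fin 6) (Fin 6) ℂ :=
  !![(zn 60)⁻¹, 0, 0, 0, 0, 0;
     0, zn 60 ^ 11, 0, 0, 0, 0;
     0, 0, 0, 0, (zn 240)⁻¹, 0;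
     0, 0, 0, 0, 0, zn 240 ^ 71;
     0, 0, (zn 240)⁻¹, 0, 0, 0;
     0, 0, 0, zn 240 ^ 71, 0, 0]

/-- The matrix `M_S`. -/
def MS : Matrix (Fin 6) (Fin 6) ℂ :=
  !![0, 0, alphaC, betaC, 0, 0;
     0, 0, betaC, -alphaC, 0, 0;
     alphaC/2, betaC/2, 0, 0, 0, 0;
     betaC/2, -alphaC/2, 0, 0, 0, 0;
     0, 0, 0, 0, betaC/(Real.sqrt 2 : ℂ), alphaC/(Real.sqrt 2 : ℂ);
     0, 0, 0, 0, alphaC/(Real.sqrt 2 : ℂ), -betaC/(Real.sqrt 2 : ℂ)]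

/-- The generalized eta function `η_{10,1}(z) = q^{23/60} ∏_{n≥1, n≡±1 (10)} (1-qⁿ)`. -/
def etaTen1 (z : ℂ) : ℂ :=
  eQ (23/60) z * ∏' n : ℕ, ((1 - eQ 1 z ^ (10 * n + 1)) * (1 - eQ 1 z ^ (10 * n + 9)))

/-- The generalized eta function `η_{10,3}(z) = q^{-13/60} ∏_{n≥1, n≡±3 (10)} (1-qⁿ)`. -/
def etaTen3 (z : ℂ) : ℂ :=
  eQ (-13/60) z * ∏' n : ℕ, ((1 - eQ 1 z ^ (10 * n + 3)) * (1 - eQ 1 z ^ (10 * n + 7)))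

/-- The right-hand side `R(z)` of Lemma 2. -/
def Rfun (z : ℂ) : ℂ :=
  2 * (eta (2 * z) ^ 2 / eta z) * (alphaC⁻¹ * rrg (10 * z) + betaC⁻¹ * rrh (10 * z)) -
    2 * (eta (50 * z) ^ 2 / eta (25 * z)) * (betaC * rrg (10 * z) - alphaC * rrh (10 * z))

/-- The sign `a_h`. -/
def ah (h : ℕ) : ℂ := if h < 30 then 1 else -1

/-- The sign `b_h`. -/
def bh (h : ℕ) : ℂ :=
  if h % 60 = 1 ∨ h % 60 = 13 ∨ h % 60 = 47 ∨ h % 60 = 59 then 1 else -1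

/-- The coefficient of `𝔢_h - 𝔢_{-h}` (for `0 < h < 60`) in the vector `𝓗`. -/
def coeffH (H : ℂ → Fin 6 → ℂ) (z : ℂ) (h : ℕ) : ℂ :=
  if (h % 10 = 1 ∨ h % 10 = 9) ∧ Nat.gcd h 60 = 1 then ah h * H z 2 + bh h * H z 4
  else if (h % 10 = 2 ∨ h % 10 = 8) ∧ Nat.gcd h 60 = 2 then -(H z 0)
  else if (h % 10 = 3 ∨ h % 10 = 7) ∧ Nat.gcd h 60 = 1 then ah h * H z 3 + bh h * H z 5
  else if (h % 10 = 4 ∨ h % 10 = 6) ∧ Nat.gcd h 60 = 2 then -(H z 1)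
  else 0

/-- The `𝔢_k`-component of the vector-valued function `𝓗` built from `H`. -/
def calH (H : ℂ → Fin 6 → ℂ) (z : ℂ) (k : ZMod 120) : ℂ :=
  ∑ h ∈ Finset.Ioo 0 60, coeffH H z h *
    ((if ((h : ℕ) : ZMod 120) = k then 1 else 0) - (if -((h : ℕ) : ZMod 120) = k then 1 else 0))


/-! ### Auxiliary lemmas -/

def EE (q : ℚ) : ℂ := Complex.exp (Real.pi * Complex.I * (q : ℂ))

lemma exp_eq_of {x y : ℂ} (k : ℤ) (h : x = y + (k : ℂ) * (2 * (Real.pi : ℂ) * Complex.I)) :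
    Complex.exp x = Complex.exp y := by
  rw [h, Complex.exp_add, Complex.exp_int_mul_two_pi_mul_I, mul_one]

lemma EE_mul (a b : ℚ) : EE a * EE b = EE (a + b) := by
  rw [EE, EE, EE, ← Complex.exp_add]; congr 1; push_cast; ring

lemma EE_div (a b : ℚ) : EE a / EE b = EE (a - b) := by
  rw [EE, EE, EE, ← Complex.exp_sub]; congr 1; push_cast; ring

lemma EE_inv (a : ℚ) : (EE a)⁻¹ = EE (-a) := by
  rw [EE, EE, ← Complex.exp_neg]; congr 1; push_cast; ring

lemma EE_pow (a : ℚ) (n : ℕ) : EE a ^ n = EE ((n : ℚ) * a) := by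
  rw [EE, EE, ← Complex.exp_nat_mul]; congr 1; push_cast; ring

lemma EE_zpow (a : ℚ) (n : ℤ) : EE a ^ n = EE ((n : ℚ) * a) := by
  rw [EE, EE, ← Complex.exp_int_mul]; congr 1; push_cast; ring

lemma EE_zero : EE 0 = 1 := by simp [EE]

lemma EE_eq (a b : ℚ) (k : ℤ) (h : a = b + 2 * k) : EE a = EE b := by
  rw [EE, EE]; exact exp_eq_of k (by rw [h]; push_cast; ring)

lemma zn_eq (n : ℕ) : zn n = EE (2 / (n : ℚ)) := by
  rw [zn, EE]; congr 1; push_cast; ring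

lemma zn60_eq : zn 60 = EE (1/30) := by rw [zn_eq]; norm_num
lemma zn240_eq : zn 240 = EE (1/120) := by rw [zn_eq]; norm_num
lemma zn48_eq : zn 48 = EE (1/24) := by rw [zn_eq]; norm_num
lemma zn60_inv : (zn 60)⁻¹ = EE (-1/30) := by rw [zn60_eq, EE_inv]; norm_num
lemma zn240_inv : (zn 240)⁻¹ = EE (-1/120) := by rw [zn240_eq, EE_inv]; norm_num
lemma zn60_pow11 : zn 60 ^ 11 = EE (11/30) := by rw [zn60_eq, EE_pow]; norm_num
lemma zn240_pow71 : zn 240 ^ 71 = EE (71/120) := by rw [zn240_eq, EE_pow]; norm_num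
lemma zn240_zpow : zn 240 ^ (-71 : ℤ) = EE (-71/120) := by rw [zn240_eq, EE_zpow]; norm_num
lemma zn48_pow25 : zn 48 ^ 25 = EE (25/24) := by rw [zn48_eq, EE_pow]; norm_num

lemma eQ_add (r : ℚ) (z c : ℂ) :
    eQ r (z + c) = Complex.exp (2 * Real.pi * Complex.I * (r : ℂ) * c) * eQ r z := by
  rw [eQ, eQ, ← Complex.exp_add]; ring_nf

lemma eQ_shift (r : ℚ) (z c : ℂ) (k : ℤ)
    (h : 2 * (Real.pi : ℂ) * Complex.I * (r : ℂ) * c = (k : ℂ) * (2 * (Real.pi : ℂ) * Complex.I)) :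
    eQ r (z + c) = eQ r z := by
  rw [eQ_add, h, Complex.exp_int_mul_two_pi_mul_I, one_mul]

lemma eta_shift2 (z : ℂ) : eta (z + 2) = EE (1/6) * eta z := by
  rw [eta, eta, eQ_add, eQ_shift 1 z 2 2 (by push_cast; ring)]
  rw [show Complex.exp (2 * Real.pi * Complex.I * ((1/24 : ℚ) : ℂ) * 2) = EE (1/6) from by
    rw [EE]; exact exp_eq_of 0 (by push_cast; ring)]
  ring

lemma eta_shift3 (z : ℂ) : eta (z + 3) = EE (1/4) * eta z := by
  rw [eta, eta, eQ_add, eQ_shift 1 z 3 3 (by push_cast; ring)]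
  rw [show Complex.exp (2 * Real.pi * Complex.I * ((1/24 : ℚ) : ℂ) * 3) = EE (1/4) from by
    rw [EE]; exact exp_eq_of 0 (by push_cast; ring)]
  ring

lemma eta_shift5 (z : ℂ) : eta (z + 5) = EE (5/12) * eta z := by
  rw [eta, eta, eQ_add, eQ_shift 1 z 5 5 (by push_cast; ring)]
  rw [show Complex.exp (2 * Real.pi * Complex.I * ((1/24 : ℚ) : ℂ) * 5) = EE (5/12) from by
    rw [EE]; exact exp_eq_of 0 (by push_cast; ring)]
  ring

lemma eta_shift10 (z : ℂ) : eta (z + 10) = EE (5/6) * eta z := by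
  rw [eta, eta, eQ_add, eQ_shift 1 z 10 10 (by push_cast; ring)]
  rw [show Complex.exp (2 * Real.pi * Complex.I * ((1/24 : ℚ) : ℂ) * 10) = EE (5/6) from by
    rw [EE]; exact exp_eq_of 0 (by push_cast; ring)]
  ring

lemma rrg_shift (z : ℂ) : rrg (z + 1) = EE (-1/30) * rrg z := by
  rw [rrg, rrg, eQ_add, eQ_shift 1 z 1 1 (by push_cast; ring)]
  rw [show Complex.exp (2 * Real.pi * Complex.I * ((-1/60 : ℚ) : ℂ) * 1) = EE (-1/30) from by
    rw [EE]; exact exp_eq_of 0 (by push_cast; ring)]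
  ring

lemma rrh_shift (z : ℂ) : rrh (z + 1) = EE (11/30) * rrh z := by
  rw [rrh, rrh, eQ_add, eQ_shift 1 z 1 1 (by push_cast; ring)]
  rw [show Complex.exp (2 * Real.pi * Complex.I * ((11/60 : ℚ) : ℂ) * 1) = EE (11/30) from by
    rw [EE]; exact exp_eq_of 0 (by push_cast; ring)]
  ring

lemma Mm_shift5 (a : ℕ) (z : ℂ) : Mm a (z + 5) = Mm a z := by
  rw [Mm, Mm, eQ_shift 1 z 5 5 (by push_cast; ring),
    eQ_shift ((a : ℚ)/5) z 5 a (by push_cast; ring),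
    eQ_shift (1 - (a : ℚ)/5) z 5 (5 - (a : ℤ)) (by push_cast; ring)]

lemma gth_shift (m : ℤ) (hm : Odd m) (b : ℝ) (τ : ℂ) :
    gth ((m : ℝ)/30) b (τ - 15) =
      Complex.exp (-(15 * Real.pi * Complex.I) * ((m : ℂ)/30) ^ 2) * gth ((m : ℝ)/30) b τ := by
  rw [gth, gth, ← tsum_mul_left]
  refine tsum_congr fun n => ?_
  have ha : (((m : ℝ)/30 : ℝ) : ℂ) = (m : ℂ)/30 := by push_cast; ring
  simp only [ha]
  obtain ⟨s, hs⟩ := hm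
  obtain ⟨j, hj⟩ : Even (m * n + 15 * n ^ 2) := by
    rcases Int.even_or_odd n with ⟨t, ht⟩ | ⟨t, ht⟩
    · exact ⟨m * t + 30 * t ^ 2, by rw [hs, ht]; ring⟩
    · exact ⟨2 * s * t + s + 31 * t + 30 * t ^ 2 + 8, by rw [hs, ht]; ring⟩
  have hj' : (m : ℂ) * n + 15 * (n : ℂ) ^ 2 = (j : ℂ) + (j : ℂ) := by exact_mod_cast hj
  have key : Complex.exp (Real.pi * Complex.I * ((m : ℂ)/30 + (n : ℂ)) ^ 2 * (τ - 15) +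
        2 * Real.pi * Complex.I * ((m : ℂ)/30 + (n : ℂ)) * (b : ℂ)) =
      Complex.exp (-(15 * Real.pi * Complex.I) * ((m : ℂ)/30) ^ 2) *
        Complex.exp (Real.pi * Complex.I * ((m : ℂ)/30 + (n : ℂ)) ^ 2 * τ +
          2 * Real.pi * Complex.I * ((m : ℂ)/30 + (n : ℂ)) * (b : ℂ)) := by
    rw [← Complex.exp_add]
    exact exp_eq_of (-j) (by push_cast; linear_combination (-(Real.pi : ℂ) * Complex.I) * hj')
  rw [key]; ring

lemma RInt_shift (m : ℤ) (hm : Odd m) (b : ℝ) (z : ℂ) :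
    RInt ((m : ℝ)/30) b (z + 15) =
      Complex.exp (-(15 * Real.pi * Complex.I) * ((m : ℂ)/30) ^ 2) * RInt ((m : ℝ)/30) b z := by
  rw [RInt, RInt]
  have hconj : (starRingEnd ℂ) (z + 15) = (starRingEnd ℂ) z + 15 := by
    rw [map_add, map_ofNat]
  rw [hconj]
  have key : ∀ t : ℝ,
      gth ((m : ℝ)/30) (-b) (-((starRingEnd ℂ) z + 15) + (t : ℂ) * Complex.I) /
          (-Complex.I * ((-((starRingEnd ℂ) z + 15) + (t : ℂ) * Complex.I) + (z + 15))) ^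
            ((1 : ℂ)/2) * Complex.I =
        Complex.exp (-(15 * Real.pi * Complex.I) * ((m : ℂ)/30) ^ 2) *
          (gth ((m : ℝ)/30) (-b) (-((starRingEnd ℂ) z) + (t : ℂ) * Complex.I) /
            (-Complex.I * ((-((starRingEnd ℂ) z) + (t : ℂ) * Complex.I) + z)) ^
              ((1 : ℂ)/2) * Complex.I) := by
    intro t
    rw [show -((starRingEnd ℂ) z + 15) + (t : ℂ) * Complex.I =
        (-((starRingEnd ℂ) z) + (t : ℂ) * Complex.I) - 15 from by ring]
    rw [gth_shift m hm]
    rw [show (-((starRingEnd ℂ) z) + (t : ℂ) * Complex.I - 15) + (z + 15) =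
        (-((starRingEnd ℂ) z) + (t : ℂ) * Complex.I) + z from by ring]
    ring
  simp only [key]
  rw [MeasureTheory.integral_const_mul]
  ring

lemma Mtilde1_shift5 (w : ℂ) : Mtilde 1 (w + 5) = EE (-1/60) * Mtilde 1 w := by
  rw [Mtilde, Mtilde, Mm_shift5, eQ_add]
  rw [show (3 : ℂ) * (w + 5) = 3 * w + 15 from by ring]
  rw [show (6 * ((1 : ℕ) : ℝ) - 5)/30 = ((1 : ℤ) : ℝ)/30 from by norm_num,
      show (6 * ((1 : ℕ) : ℝ) + 5)/30 = ((11 : ℤ) : ℝ)/30 from by norm_num,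
      RInt_shift 1 ⟨0, by norm_num⟩, RInt_shift 11 ⟨5, by norm_num⟩]
  rw [show Complex.exp (2 * Real.pi * Complex.I *
        ((3 * ((1 : ℕ) : ℚ) / 10 * (1 - ((1 : ℕ) : ℚ)/5) - 1/24 : ℚ) : ℂ) * 5) = EE (-1/60) from by
    rw [EE]; exact exp_eq_of 1 (by push_cast; ring)]
  rw [show Complex.exp (-(15 * Real.pi * Complex.I) * (((1 : ℤ) : ℂ)/30) ^ 2) = EE (-1/60) from by
    rw [EE]; exact exp_eq_of 0 (by push_cast; ring)]
  rw [show Complex.exp (-(15 * Real.pi * Complex.I) * (((11 : ℤ) : ℂ)/30) ^ 2) = EE (-1/60) from by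
    rw [EE]; exact exp_eq_of (-1) (by push_cast; ring)]
  ring

lemma Mtilde2_shift5 (w : ℂ) : Mtilde 2 (w + 5) = EE (71/60) * Mtilde 2 w := by
  rw [Mtilde, Mtilde, Mm_shift5, eQ_add]
  rw [show (3 : ℂ) * (w + 5) = 3 * w + 15 from by ring]
  rw [show (6 * ((2 : ℕ) : ℝ) - 5)/30 = ((7 : ℤ) : ℝ)/30 from by norm_num,
      show (6 * ((2 : ℕ) : ℝ) + 5)/30 = ((17 : ℤ) : ℝ)/30 from by norm_num,
      RInt_shift 7 ⟨3, by norm_num⟩, RInt_shift 17 ⟨8, by norm_num⟩]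
  rw [show Complex.exp (2 * Real.pi * Complex.I *
        ((3 * ((2 : ℕ) : ℚ) / 10 * (1 - ((2 : ℕ) : ℚ)/5) - 1/24 : ℚ) : ℂ) * 5) = EE (71/60) from by
    rw [EE]; exact exp_eq_of 1 (by push_cast; ring)]
  rw [show Complex.exp (-(15 * Real.pi * Complex.I) * (((7 : ℤ) : ℂ)/30) ^ 2) = EE (71/60) from by
    rw [EE]; exact exp_eq_of (-1) (by push_cast; ring)]
  rw [show Complex.exp (-(15 * Real.pi * Complex.I) * (((17 : ℤ) : ℂ)/30) ^ 2) = EE (71/60) from by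
    rw [EE]; exact exp_eq_of (-3) (by push_cast; ring)]
  ring

lemma Mtilde1_shift10 (w : ℂ) : Mtilde 1 (w + 10) = EE (-1/30) * Mtilde 1 w := by
  rw [show w + 10 = (w + 5) + 5 from by ring, Mtilde1_shift5, Mtilde1_shift5, ← mul_assoc,
    EE_mul, show (-1/60 + -1/60 : ℚ) = -1/30 from by norm_num]

lemma Mtilde2_shift10 (w : ℂ) : Mtilde 2 (w + 10) = EE (11/30) * Mtilde 2 w := by
  rw [show w + 10 = (w + 5) + 5 from by ring, Mtilde2_shift5, Mtilde2_shift5, ← mul_assoc,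
    EE_mul, show EE (71/60 + 71/60) = EE (11/30) from EE_eq _ _ 1 (by norm_num)]

lemma zn240_pow71_inv : (zn 240 ^ (71 : ℤ))⁻¹ = EE (-71/120) := by
  rw [zn240_eq, EE_zpow, EE_inv]; norm_num

lemma cons_val_five' {α : Type*} (x : α) (u : Fin 5 → α) : Matrix.vecCons x u 5 = u 4 := rfl

theorem stmt10 : ∀ z : ℂ, 0 < z.im → Gvec (z + 1) = MT.mulVec (Gvec z) := by
  intro z _
  funext i
  fin_cases i <;>
    simp [Gvec, MT, Matrix.mulVec, dotProduct, Fin.sum_univ_six, cons_val_five']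
  · rw [show 10 * (z + 1) = 10 * z + 10 from by ring, show 5 * (z + 1) = 5 * z + 5 from by ring,
      Mtilde1_shift10, eta_shift5, eta_shift10, rrg_shift, zn60_inv]
    have h2 : EE (5/12) ^ 2 / EE (5/6) = 1 := by
      rw [EE_pow, EE_div, show ((2 : ℕ) : ℚ) * (5/12) - 5/6 = 0 from by norm_num, EE_zero]
    linear_combination (EE (-1/30) * (eta (5 * z) ^ 2 / eta (10 * z)) * rrg z) * h2
  · rw [show 10 * (z + 1) = 10 * z + 10 from by ring, show 5 * (z + 1) = 5 * z + 5 from by ring,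
      Mtilde2_shift10, eta_shift5, eta_shift10, rrh_shift, zn60_pow11]
    have h2 : EE (5/12) ^ 2 / EE (5/6) = 1 := by
      rw [EE_pow, EE_div, show ((2 : ℕ) : ℚ) * (5/12) - 5/6 = 0 from by norm_num, EE_zero]
    linear_combination (EE (11/30) * (eta (5 * z) ^ 2 / eta (10 * z)) * rrh z) * h2
  · rw [show 5 * (z + 1) / 2 = (5 * z + 5) / 2 from by ring,
      show 5 * (z + 1) = 5 * z + 5 from by ring, eta_shift5,
      show eta ((5 * z + 5) / 2) = EE (1/6) * eta ((5 * z + 1) / 2) from by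
        rw [show (5 * z + 5) / 2 = (5 * z + 1) / 2 + 2 from by ring, eta_shift2],
      rrh_shift, zn240_inv, zn240_eq, zn48_pow25]
    have h1 : EE (-1/120) * EE (1/120) = 1 := by
      rw [EE_mul, show (-1/120 + 1/120 : ℚ) = 0 from by norm_num, EE_zero]
    have h2 : EE (5/12) ^ 2 / EE (1/6) * EE (11/30) = EE (-1/120) * EE (25/24) := by
      rw [EE_pow, EE_div, EE_mul, EE_mul]; exact EE_eq _ _ 0 (by norm_num)
    linear_combination (-(2⁻¹ * Mtilde 1 ((5 * z + 5) / 2))) * h1 +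
      (-(eta (5 * z) ^ 2 / eta ((5 * z + 1) / 2) * rrh z)) * h2
  · rw [show 5 * (z + 1) / 2 = (5 * z + 5) / 2 from by ring,
      show 5 * (z + 1) = 5 * z + 5 from by ring, eta_shift5,
      show eta ((5 * z + 5) / 2) = EE (1/6) * eta ((5 * z + 1) / 2) from by
        rw [show (5 * z + 5) / 2 = (5 * z + 1) / 2 + 2 from by ring, eta_shift2],
      rrg_shift, (by rw [zn240_eq, EE_pow, EE_inv]; norm_num : (zn 240 ^ 71)⁻¹ = EE (-71/120)), zn240_pow71, zn48_eq]
    have h1 : EE (71/120) * EE (-71/120) = 1 := by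
      rw [EE_mul, show (71/120 + -71/120 : ℚ) = 0 from by norm_num, EE_zero]
    have h2 : EE (5/12) ^ 2 / EE (1/6) * EE (-1/30) = EE (71/120) * EE (1/24) := by
      rw [EE_pow, EE_div, EE_mul, EE_mul]; exact EE_eq _ _ 0 (by norm_num)
    linear_combination (-(2⁻¹ * Mtilde 2 ((5 * z + 5) / 2))) * h1 +
      (eta (5 * z) ^ 2 / eta ((5 * z + 1) / 2) * rrg z) * h2
  · rw [show (5 * (z + 1) + 5) / 2 = 5 * z / 2 + 5 from by ring,
      show (5 * (z + 1) + 1) / 2 = 5 * z / 2 + 3 from by ring,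
      show 5 * (z + 1) = 5 * z + 5 from by ring,
      Mtilde1_shift5, eta_shift3, eta_shift5, rrh_shift, zn240_inv, zn240_eq, zn48_pow25]
    have h1 : EE (1/120) * EE (-1/60) = EE (-1/120) := by
      rw [EE_mul]; exact EE_eq _ _ 0 (by norm_num)
    have h2 : EE (25/24) * (EE (5/12) ^ 2 / EE (1/4)) * EE (11/30) = EE (-1/120) := by
      rw [EE_pow, EE_div, EE_mul, EE_mul]; exact EE_eq _ _ 1 (by norm_num)
    linear_combination (2⁻¹ * Mtilde 1 (5 * z / 2)) * h1 +
      (-(eta (5 * z) ^ 2 / eta (5 * z / 2) * rrh z)) * h2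
  · rw [show (5 * (z + 1) + 5) / 2 = 5 * z / 2 + 5 from by ring,
      show (5 * (z + 1) + 1) / 2 = 5 * z / 2 + 3 from by ring,
      show 5 * (z + 1) = 5 * z + 5 from by ring,
      Mtilde2_shift5, eta_shift3, eta_shift5, rrg_shift, (by rw [zn240_eq, EE_pow, EE_inv]; norm_num : (zn 240 ^ 71)⁻¹ = EE (-71/120)), zn240_pow71, zn48_eq]
    have h1 : EE (-71/120) * EE (71/60) = EE (71/120) := by
      rw [EE_mul]; exact EE_eq _ _ 0 (by norm_num)
    have h2 : EE (1/24) * (EE (5/12) ^ 2 / EE (1/4)) * EE (-1/30) = EE (71/120) := by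
      rw [EE_pow, EE_div, EE_mul, EE_mul]; exact EE_eq _ _ 0 (by norm_num)
    linear_combination (2⁻¹ * Mtilde 2 (5 * z / 2)) * h1 +
      (eta (5 * z) ^ 2 / eta (5 * z / 2) * rrg z) * h2
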